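/- Let a be a real number with 0 < a ≤ 1/8, let E = [−1,−a] ∪ [a,1], and define m_4(x) = (8x⁴ − 8x²(1+a²) + 1 + 6a² + a⁴)/(1−a²)² and T_3(x) = 4x³ − 3x. Then: (i) |T_3(x)| ≤ 1 for all x ∈ E; (ii) |m_4(x)| ≤ 1 for all x ∈ E; (iii) m_4′(a) = −16a/(1−a²); and (iv) |T_3′(a)| = 3 − 12a² > 16a/(1−a²) = |m_4′(a)|. -/

import Mathlib

open Set

theorem gap_condition_essential_counterexample
    (a : ℝ) (ha : 0 < a) (ha' : a ≤ 1 / 8)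
    (E : Set ℝ) (hE : E = Icc (-1 : ℝ) (-a) ∪ Icc a 1)
    (m4 T3 : ℝ → ℝ)
    (hm4 : ∀ x : ℝ, m4 x =
      (8 * x ^ 4 - 8 * x ^ 2 * (1 + a ^ 2) + 1 + 6 * a ^ 2 + a ^ 4) / (1 - a ^ 2) ^ 2)
    (hT3 : ∀ x : ℝ, T3 x = 4 * x ^ 3 - 3 * x) :
    (∀ x ∈ E, |T3 x| ≤ 1) ∧
    (∀ x ∈ E, |m4 x| ≤ 1) ∧
    deriv m4 a = -(16 * a) / (1 - a ^ 2) ∧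
    (|deriv T3 a| = 3 - 12 * a ^ 2 ∧
      3 - 12 * a ^ 2 > 16 * a / (1 - a ^ 2) ∧
      16 * a / (1 - a ^ 2) = |deriv m4 a|) := by
  have ha1 : a < 1 := lt_of_le_of_lt ha' (by norm_num)
  have hne : (1 : ℝ) - a ^ 2 ≠ 0 := by nlinarith
  have hden : (0 : ℝ) < (1 - a ^ 2) ^ 2 := by nlinarith
  have hgap : (0 : ℝ) < 1 - a ^ 2 := by nlinarith
  -- derivative of m4
  have hm4' : m4 = fun x : ℝ =>
      (8 * x ^ 4 - 8 * x ^ 2 * (1 + a ^ 2) + 1 + 6 * a ^ 2 + a ^ 4) / (1 - a ^ 2) ^ 2 :=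
    funext hm4
  have hT3' : T3 = fun x : ℝ => 4 * x ^ 3 - 3 * x := funext hT3
  have hdm4 : deriv m4 a = -(16 * a) / (1 - a ^ 2) := by
    have h1 := (((((hasDerivAt_pow 4 a).const_mul (8:ℝ)).sub
        (((hasDerivAt_pow 2 a).const_mul (8:ℝ)).mul_const (1 + a ^ 2))).add_const
        (1:ℝ)).add_const (6 * a ^ 2)).add_const (a ^ 4)
    have h2 := h1.div_const ((1 - a ^ 2) ^ 2)
    have h2' : HasDerivAt (fun x : ℝ => (8 * x ^ 4 - 8 * x ^ 2 * (1 + a ^ 2) + 1 + 6 * a ^ 2 + a ^ 4) / (1 - a ^ 2) ^ 2) _ a := h2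
    rw [hm4', h2'.deriv]
    push_cast
    field_simp
    ring
  have hdT3 : deriv T3 a = 12 * a ^ 2 - 3 := by
    have h1 := ((hasDerivAt_pow 3 a).const_mul (4:ℝ)).sub ((hasDerivAt_id a).const_mul (3:ℝ))
    rw [hT3']
    have : deriv (fun x : ℝ => 4 * x ^ 3 - 3 * x) a = 4 * (3 * a ^ 2) - 3 * 1 := by
      have h1' : HasDerivAt (fun x : ℝ => 4 * x ^ 3 - 3 * x) (4 * (3 * a ^ 2) - 3 * 1) a := by
        refine (h1 : HasDerivAt (fun x : ℝ => 4 * x ^ 3 - 3 * x) _ a).congr_deriv ?_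
        norm_num
      exact h1'.deriv
    rw [this]; ring
  refine ⟨?_, ?_, hdm4, ?_, ?_, ?_⟩
  · intro x hx
    rw [hE] at hx
    have hx2 : -1 ≤ x ∧ x ≤ 1 := by
      rcases hx with h | h
      · exact ⟨h.1, le_trans h.2 (by linarith)⟩
      · exact ⟨le_trans (by linarith) h.1, h.2⟩
    rw [hT3, abs_le]
    constructor
    · nlinarith [mul_nonneg (by linarith [hx2.1] : (0:ℝ) ≤ x + 1) (sq_nonneg (2 * x - 1))]
    · nlinarith [mul_nonneg (by linarith [hx2.2] : (0:ℝ) ≤ 1 - x) (sq_nonneg (2 * x + 1))]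
  · intro x hx
    rw [hE] at hx
    have hx2 : a ^ 2 ≤ x ^ 2 ∧ x ^ 2 ≤ 1 := by
      rcases hx with h | h
      · constructor <;> nlinarith [h.1, h.2]
      · constructor <;> nlinarith [h.1, h.2]
    rw [hm4, abs_le]
    constructor
    · rw [le_div_iff₀ hden]
      nlinarith [sq_nonneg (2 * x ^ 2 - (1 + a ^ 2))]
    · rw [div_le_one hden]
      nlinarith [mul_nonneg (sub_nonneg.2 hx2.1) (sub_nonneg.2 hx2.2)]
  · rw [hdT3, abs_of_nonpos (by nlinarith)]; ring
  · rw [gt_iff_lt, div_lt_iff₀ hgap]; nlinarith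
  · rw [hdm4, abs_div, abs_of_nonpos (by nlinarith : -(16 * a) ≤ 0),
      abs_of_pos hgap]; ring
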